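/- Let G be a finite group acting faithfully and primitively on a set Ω, let M be a normal subgroup of G, and let ω ∈ Ω be a point whose stabilizer M_ω in M is nontrivial. Then the normalizer N_G(M_ω) of M_ω in G equals the point stabilizer G_ω, and consequently N_M(M_ω) = M_ω. -/

import Mathlib

/-- Let `G` be a finite group acting faithfully and primitively (transitively, with
every point stabilizer a maximal subgroup) on `Ω`, let `M` be a normal subgroup of
`G`, and let `ω` be a point whose stabilizer `M_ω = M ⊓ G_ω` is nontrivial. Then
`N_G(M_ω) = G_ω`, and consequently `N_M(M_ω) = M_ω`. -/
theorem normalizer_pointStabilizer_of_primitive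
    (G : Type*) [Group G] [Finite G] (Ω : Type*) [MulAction G Ω]
    [FaithfulSMul G Ω] [MulAction.IsPretransitive G Ω]
    (hprim : ∀ ω : Ω, IsCoatom (MulAction.stabilizer G ω))
    (M : Subgroup G) (hM : M.Normal)
    (ω : Ω) (hMω : M ⊓ MulAction.stabilizer G ω ≠ ⊥) :
    Subgroup.normalizer ((M ⊓ MulAction.stabilizer G ω : Subgroup G) : Set G) = MulAction.stabilizer G ω ∧
      M ⊓ Subgroup.normalizer ((M ⊓ MulAction.stabilizer G ω : Subgroup G) : Set G) = M ⊓ MulAction.stabilizer G ω := by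
  set S := MulAction.stabilizer G ω with hS
  have hle : S ≤ Subgroup.normalizer ((M ⊓ S : Subgroup G) : Set G) := by
    rw [SetLike.le_def]
    intro g hg
    rw [Subgroup.mem_normalizer_iff]
    intro h
    simp only [Subgroup.mem_inf]
    constructor
    · rintro ⟨h1, h2⟩
      exact ⟨hM.conj_mem h h1 g, mul_mem (mul_mem hg h2) (inv_mem hg)⟩
    · rintro ⟨h1, h2⟩
      have hm : g⁻¹ * (g * h * g⁻¹) * g⁻¹⁻¹ ∈ M := hM.conj_mem _ h1 g⁻¹
      have hs : g⁻¹ * (g * h * g⁻¹) * g⁻¹⁻¹ ∈ S :=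
        mul_mem (mul_mem (inv_mem hg) h2) (inv_mem (inv_mem hg))
      have he : g⁻¹ * (g * h * g⁻¹) * g⁻¹⁻¹ = h := by group
      rw [he] at hm hs
      exact ⟨hm, hs⟩
  have hmain : Subgroup.normalizer ((M ⊓ S : Subgroup G) : Set G) = S := by
    rcases lt_or_eq_of_le hle with hlt | heq
    · exfalso
      have htop : Subgroup.normalizer ((M ⊓ S : Subgroup G) : Set G) = ⊤ := (hprim ω).2 _ hlt
      have hnorm : (M ⊓ S).Normal := Subgroup.normalizer_eq_top_iff.mp htop
      apply hMω
      ext g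
      simp only [Subgroup.mem_bot]
      constructor
      · intro hg
        have hall : ∀ ω' : Ω, g • ω' = ω' := by
          intro ω'
          obtain ⟨h, hh⟩ := MulAction.exists_smul_eq G ω ω'
          have hc : h⁻¹ * g * h⁻¹⁻¹ ∈ M ⊓ S := hnorm.conj_mem g hg h⁻¹
          have hst : (h⁻¹ * g * h) • ω = ω := by
            have h2 : (h⁻¹ * g * h⁻¹⁻¹) • ω = ω := hc.2
            simpa using h2
          calc g • ω' = g • (h • ω) := by rw [hh]
            _ = h • ((h⁻¹ * g * h) • ω) := by
                simp [mul_smul]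
            _ = h • ω := by rw [hst]
            _ = ω' := hh
        apply eq_of_smul_eq_smul (α := Ω)
        intro a
        simpa using hall a
      · rintro rfl; exact one_mem _
    · exact heq.symm
  exact ⟨hmain, by rw [hmain]⟩
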